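/- If T is a contraction on a finite-dimensional complex Hilbert space, then its asymptotic limit A_T is an orthogonal projection (A_T = A_T^2), A_T = A_{T^*}, and the stable subspaces of T and T^* coincide. -/

import Mathlib

open Filter Topology ContinuousLinearMap

set_option maxHeartbeats 1000000
set_option synthInstance.maxHeartbeats 1000000

local notation "⟪" x ", " y "⟫" => @inner ℂ _ _ x y

section Key

variable {d : ℕ}

private lemma pow_norm_le (T : EuclideanSpace ℂ (Fin d) →L[ℂ] EuclideanSpace ℂ (Fin d))
    (hT : ‖T‖ ≤ 1) : ∀ n : ℕ, ‖T ^ n‖ ≤ 1 := by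
  intro n
  induction n with
  | zero => simpa [pow_zero] using (show ‖(1 : EuclideanSpace ℂ (Fin d) →L[ℂ] EuclideanSpace ℂ (Fin d))‖ ≤ 1 from norm_id_le)
  | succ n ih =>
    calc ‖T ^ (n + 1)‖ = ‖T ^ n * T‖ := by rw [pow_succ]
    _ ≤ ‖T ^ n‖ * ‖T‖ := norm_mul_le _ _
    _ ≤ 1 * 1 := mul_le_mul ih hT (norm_nonneg _) zero_le_one
    _ = 1 := one_mul 1

private lemma key (T : EuclideanSpace ℂ (Fin d) →L[ℂ] EuclideanSpace ℂ (Fin d)) (hT : ‖T‖ ≤ 1)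
    (A : EuclideanSpace ℂ (Fin d) →L[ℂ] EuclideanSpace ℂ (Fin d))
    (hA : ∀ x, Tendsto (fun n : ℕ => (ContinuousLinearMap.adjoint (T ^ n)) ((T ^ n) x))
      atTop (𝓝 (A x)))
    (S : EuclideanSpace ℂ (Fin d) →L[ℂ] EuclideanSpace ℂ (Fin d)) (hS1 : ‖S‖ ≤ 1)
    (φ : ℕ → ℕ) (hφ : StrictMono φ)
    (hconv : Tendsto (fun k => T ^ (φ k)) atTop (𝓝 S)) :
    (∀ x, A x = ContinuousLinearMap.adjoint S (S x)) ∧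
    (∀ x, A (S x) = S x) ∧
    (∀ x, Tendsto (fun n : ℕ => ‖(T ^ n) x‖) atTop (𝓝 ‖S x‖)) := by
  -- pointwise convergence of the subsequence
  have happly : ∀ x, Tendsto (fun k => (T ^ (φ k)) x) atTop (𝓝 (S x)) := by
    intro x
    have : Tendsto (fun k => ((T ^ (φ k) : EuclideanSpace ℂ (Fin d) →L[ℂ] EuclideanSpace ℂ (Fin d)), x)) atTop (𝓝 (S, x)) :=
      hconv.prodMk_nhds tendsto_const_nhds
    exact (isBoundedBilinearMap_apply.continuous.tendsto (S, x)).comp this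
  have hadj : Tendsto (fun k => ContinuousLinearMap.adjoint (T ^ (φ k))) atTop
      (𝓝 (ContinuousLinearMap.adjoint S)) := by
    exact ((ContinuousLinearMap.adjoint :
      (EuclideanSpace ℂ (Fin d) →L[ℂ] EuclideanSpace ℂ (Fin d)) ≃ₗᵢ⋆[ℂ]
      (EuclideanSpace ℂ (Fin d) →L[ℂ] EuclideanSpace ℂ (Fin d))).continuous.tendsto S).comp hconv
  -- A = S* S pointwise
  have hAx : ∀ x, A x = ContinuousLinearMap.adjoint S (S x) := by
    intro x
    have h1 : Tendsto (fun k => (ContinuousLinearMap.adjoint (T ^ (φ k))) ((T ^ (φ k)) x))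
        atTop (𝓝 (ContinuousLinearMap.adjoint S (S x))) := by
      have : Tendsto (fun k => ((ContinuousLinearMap.adjoint (T ^ (φ k))), (T ^ (φ k)) x))
          atTop (𝓝 (ContinuousLinearMap.adjoint S, S x)) :=
        hadj.prodMk_nhds (happly x)
      exact (isBoundedBilinearMap_apply.continuous.tendsto _).comp this
    exact tendsto_nhds_unique ((hA x).comp (hφ.tendsto_atTop)) h1
  -- ⟪A y, y⟫ = ‖S y‖²
  have hAinner : ∀ y, ⟪A y, y⟫ = (‖S y‖ : ℂ) ^ 2 := by
    intro y
    rw [hAx y, adjoint_inner_left, inner_self_eq_norm_sq_to_K]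
    norm_cast
  -- limit of ‖T^n y‖²
  have hlim : ∀ y, Tendsto (fun n : ℕ => ((‖(T ^ n) y‖ : ℂ)) ^ 2) atTop (𝓝 ⟪A y, y⟫) := by
    intro y
    have h1 : Tendsto (fun n : ℕ => ⟪(ContinuousLinearMap.adjoint (T ^ n)) ((T ^ n) y), y⟫)
        atTop (𝓝 ⟪A y, y⟫) := (hA y).inner tendsto_const_nhds
    refine h1.congr fun n => ?_
    rw [adjoint_inner_left, inner_self_eq_norm_sq_to_K]
    norm_cast
  -- shift invariance: ⟪A (T^m x), T^m x⟫ = ⟪A x, x⟫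
  have hshift : ∀ (m : ℕ) x, ⟪A ((T ^ m) x), (T ^ m) x⟫ = ⟪A x, x⟫ := by
    intro m x
    have h1 : Tendsto (fun n : ℕ => ((‖(T ^ (n + m)) x‖ : ℂ)) ^ 2) atTop
        (𝓝 ⟪A ((T ^ m) x), (T ^ m) x⟫) := by
      refine (hlim ((T ^ m) x)).congr fun n => ?_
      rw [pow_add]; rfl
    have h2 : Tendsto (fun n : ℕ => ((‖(T ^ (n + m)) x‖ : ℂ)) ^ 2) atTop (𝓝 ⟪A x, x⟫) :=
      (hlim x).comp (tendsto_add_atTop_nat m)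
    exact tendsto_nhds_unique h1 h2
  -- ⟪A (S x), S x⟫ = ⟪A x, x⟫
  have hSinv : ∀ x, ⟪A (S x), S x⟫ = ⟪A x, x⟫ := by
    intro x
    have h1 : Tendsto (fun k => ⟪A ((T ^ (φ k)) x), (T ^ (φ k)) x⟫) atTop
        (𝓝 ⟪A (S x), S x⟫) :=
      ((A.continuous.tendsto (S x)).comp (happly x)).inner (happly x)
    have h2 : Tendsto (fun k => ⟪A ((T ^ (φ k)) x), (T ^ (φ k)) x⟫) atTop (𝓝 ⟪A x, x⟫) := by
      refine tendsto_const_nhds.congr fun k => ?_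
      exact (hshift (φ k) x).symm
    exact tendsto_nhds_unique h1 h2
  -- ‖S (S x)‖ = ‖S x‖
  have hnormSS : ∀ x, ‖S (S x)‖ = ‖S x‖ := by
    intro x
    have h := (hSinv x)
    rw [hAinner, hAinner] at h
    have h2 : ‖S (S x)‖ ^ 2 = ‖S x‖ ^ 2 := by
      exact_mod_cast h
    exact (pow_left_inj₀ (norm_nonneg _) (norm_nonneg _) two_ne_zero).mp h2
  -- A S = S
  have hAS : ∀ x, A (S x) = S x := by
    intro x
    set u := ContinuousLinearMap.adjoint S (S (S x)) with hu
    set v := S x with hv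
    have hunorm : ‖u‖ ≤ ‖v‖ := by
      calc ‖u‖ ≤ ‖ContinuousLinearMap.adjoint S‖ * ‖S (S x)‖ := le_opNorm _ _
      _ ≤ 1 * ‖S (S x)‖ := by
          gcongr
          rw [LinearIsometryEquiv.norm_map]; exact hS1
      _ = ‖v‖ := by rw [one_mul, hnormSS x]
    have hinner : ⟪u, v⟫ = (‖v‖ : ℂ) ^ 2 := by
      rw [hu, adjoint_inner_left, inner_self_eq_norm_sq_to_K, hv, hnormSS x]
      norm_cast
    have hsub : ‖u - v‖ ^ 2 ≤ 0 := by
      have hns := @norm_sub_sq ℂ _ _ _ _ u v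
      rw [hinner] at hns
      have hre : RCLike.re ((‖v‖ : ℂ) ^ 2) = ‖v‖ ^ 2 := by
        simp [RCLike.re_to_complex, ← Complex.ofReal_pow]
      rw [hns, hre]
      nlinarith [norm_nonneg v, norm_nonneg u, sq_nonneg ‖v‖]
    have : u = v := by
      have h0 : ‖u - v‖ = 0 := le_antisymm (by nlinarith [norm_nonneg (u - v)]) (norm_nonneg _)
      rwa [norm_eq_zero, sub_eq_zero] at h0
    rw [hAx (S x)]
    exact this
  exact ⟨hAx, hAS, by
    intro x
    have h1 : Tendsto (fun n : ℕ => ‖(T ^ n) x‖ ^ 2) atTop (𝓝 (‖S x‖ ^ 2)) := by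
      have h0 := hlim x
      rw [hAinner] at h0
      have h2 : Tendsto (fun n : ℕ => Complex.re (((‖(T ^ n) x‖ : ℂ)) ^ 2)) atTop
          (𝓝 (Complex.re ((‖S x‖ : ℂ) ^ 2))) := (Complex.continuous_re.tendsto _).comp h0
      simp only [← Complex.ofReal_pow, Complex.ofReal_re] at h2
      exact h2
    have h3 : Tendsto (fun n : ℕ => Real.sqrt (‖(T ^ n) x‖ ^ 2)) atTop
        (𝓝 (Real.sqrt (‖S x‖ ^ 2))) := (Real.continuous_sqrt.tendsto _).comp h1
    simpa [Real.sqrt_sq (norm_nonneg _)] using h3⟩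

end Key

/-- For a contraction `T` on a finite-dimensional complex Hilbert space, the
asymptotic limit `A = lim T^{*n}T^n` is an orthogonal projection, coincides with
the asymptotic limit of `T^*`, and the stable subspaces of `T` and `T^*` coincide. -/
theorem stmt4 {d : ℕ} (T : EuclideanSpace ℂ (Fin d) →L[ℂ] EuclideanSpace ℂ (Fin d))
    (hT : ‖T‖ ≤ 1) (A A' : EuclideanSpace ℂ (Fin d) →L[ℂ] EuclideanSpace ℂ (Fin d))
    (hA : ∀ x, Tendsto (fun n : ℕ => (ContinuousLinearMap.adjoint (T ^ n)) ((T ^ n) x))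
      atTop (𝓝 (A x)))
    (hA' : ∀ x, Tendsto
      (fun n : ℕ => (ContinuousLinearMap.adjoint ((ContinuousLinearMap.adjoint T) ^ n))
        (((ContinuousLinearMap.adjoint T) ^ n) x)) atTop (𝓝 (A' x))) :
    A * A = A ∧ IsSelfAdjoint A ∧ A = A' ∧
      ∀ x, (Tendsto (fun n : ℕ => ‖(T ^ n) x‖) atTop (𝓝 0) ↔
        Tendsto (fun n : ℕ => ‖((ContinuousLinearMap.adjoint T) ^ n) x‖) atTop (𝓝 0)) := by
  -- extract a norm-convergent subsequence of T^n
  have hball : ∀ n : ℕ, T ^ n ∈ Metric.closedBall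
      (0 : EuclideanSpace ℂ (Fin d) →L[ℂ] EuclideanSpace ℂ (Fin d)) 1 := by
    intro n
    simpa [Metric.mem_closedBall, dist_zero_right] using pow_norm_le T hT n
  obtain ⟨S, hSmem, φ, hφ, hconv⟩ :=
    tendsto_subseq_of_bounded Metric.isBounded_closedBall hball
  rw [Metric.isClosed_closedBall.closure_eq] at hSmem
  have hS1 : ‖S‖ ≤ 1 := by simpa [Metric.mem_closedBall, dist_zero_right] using hSmem
  obtain ⟨hAx, hAS, hnormT⟩ := key T hT A hA S hS1 φ hφ hconv
  -- the adjoint side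
  have hpowadj : ∀ n : ℕ, (ContinuousLinearMap.adjoint T) ^ n =
      ContinuousLinearMap.adjoint (T ^ n) := by
    intro n
    rw [← star_eq_adjoint, ← star_eq_adjoint, ← star_pow]
  have hT' : ‖ContinuousLinearMap.adjoint T‖ ≤ 1 := by
    rw [LinearIsometryEquiv.norm_map]; exact hT
  have hS1' : ‖ContinuousLinearMap.adjoint S‖ ≤ 1 := by
    rw [LinearIsometryEquiv.norm_map]; exact hS1
  have hconv' : Tendsto (fun k => (ContinuousLinearMap.adjoint T) ^ (φ k)) atTop
      (𝓝 (ContinuousLinearMap.adjoint S)) := by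
    have := ((ContinuousLinearMap.adjoint :
      (EuclideanSpace ℂ (Fin d) →L[ℂ] EuclideanSpace ℂ (Fin d)) ≃ₗᵢ⋆[ℂ]
      (EuclideanSpace ℂ (Fin d) →L[ℂ] EuclideanSpace ℂ (Fin d))).continuous.tendsto S).comp hconv
    refine this.congr fun k => ?_
    exact (hpowadj (φ k)).symm
  obtain ⟨hA'x, hA'S, hnormT'⟩ := key (ContinuousLinearMap.adjoint T) hT' A' hA'
    (ContinuousLinearMap.adjoint S) hS1' φ hφ hconv'
  -- rewrite A' x = S (S* x)
  have hA'x2 : ∀ x, A' x = S (ContinuousLinearMap.adjoint S x) := by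
    intro x
    rw [hA'x x, adjoint_adjoint]
  have hA'S2 : ∀ x, A' (ContinuousLinearMap.adjoint S x) = ContinuousLinearMap.adjoint S x :=
    hA'S
  -- A ∘ A' = A' and A' ∘ A = A pointwise
  have hAA' : ∀ x, A (A' x) = A' x := by
    intro x
    rw [hA'x2 x]
    exact hAS (ContinuousLinearMap.adjoint S x)
  have hA'A : ∀ x, A' (A x) = A x := by
    intro x
    rw [hAx x]
    exact hA'S2 (S x)
  -- self-adjointness
  have hAsa : IsSelfAdjoint A := by
    have hAop : A = ContinuousLinearMap.adjoint S ∘L S := ContinuousLinearMap.ext fun x => hAx x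
    rw [IsSelfAdjoint, star_eq_adjoint, hAop, adjoint_comp, adjoint_adjoint]
  have hA'sa : IsSelfAdjoint A' := by
    have hA'op : A' = S ∘L ContinuousLinearMap.adjoint S := ContinuousLinearMap.ext fun x => hA'x2 x
    rw [IsSelfAdjoint, star_eq_adjoint, hA'op, adjoint_comp, adjoint_adjoint]
  -- A = A'
  have hAA'op : A ∘L A' = A' := ContinuousLinearMap.ext fun x => hAA' x
  have hAeq : A = A' := by
    have h1 : ContinuousLinearMap.adjoint (A ∘L A') = ContinuousLinearMap.adjoint A' := by
      rw [hAA'op]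
    rw [adjoint_comp] at h1
    rw [← star_eq_adjoint, ← star_eq_adjoint, hA'sa.star_eq, hAsa.star_eq] at h1
    -- h1 : A' ∘L A = A'
    have h2 : ∀ x, A x = A' x := by
      intro x
      have := congrArg (fun f => f (A x)) h1.symm
      simp only [ContinuousLinearMap.comp_apply] at this
      calc A x = A' (A x) := (hA'A x).symm
      _ = A' x := by
        have h3 : A' ∘L A = A' := h1
        have := congrArg (fun f => f x) h3
        simpa using this
    exact ContinuousLinearMap.ext h2
  -- A * A = A
  have hidem : A * A = A := ContinuousLinearMap.ext fun x => by
    rw [ContinuousLinearMap.mul_apply]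
    calc A (A x) = A (A' x) := by rw [hAeq]
    _ = A' x := hAA' x
    _ = A x := by rw [hAeq]
  refine ⟨hidem, hAsa, hAeq, ?_⟩
  -- stable subspaces
  intro x
  have hSz : S x = 0 ↔ ContinuousLinearMap.adjoint S x = 0 := by
    constructor
    · intro h
      have hAx0 : A x = 0 := by rw [hAx x, h, map_zero]
      have hA'x0 : A' x = 0 := by rw [← hAeq]; exact hAx0
      have h4 : ⟪A' x, x⟫ = (0 : ℂ) := by rw [hA'x0, inner_zero_left]
      rw [hA'x2 x, ← adjoint_inner_right] at h4
      exact inner_self_eq_zero.mp h4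
    · intro h
      have hA'x0 : A' x = 0 := by rw [hA'x2 x, h, map_zero]
      have hAx0 : A x = 0 := by rw [hAeq]; exact hA'x0
      have h4 : ⟪A x, x⟫ = (0 : ℂ) := by rw [hAx0, inner_zero_left]
      rw [hAx x, adjoint_inner_left] at h4
      exact inner_self_eq_zero.mp h4
  constructor
  · intro h
    have h0 : ‖S x‖ = 0 := tendsto_nhds_unique (hnormT x) h
    have hSx0 : ContinuousLinearMap.adjoint S x = 0 := hSz.mp (by rwa [norm_eq_zero] at h0)
    have := hnormT' x
    rwa [hSx0, norm_zero] at this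
  · intro h
    have h0 : ‖ContinuousLinearMap.adjoint S x‖ = 0 := tendsto_nhds_unique (hnormT' x) h
    have hSx0 : S x = 0 := hSz.mpr (by rwa [norm_eq_zero] at h0)
    have := hnormT x
    rwa [hSx0, norm_zero] at this
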